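/- Let k be a commutative ring (e.g. a field), let 𝔤 and 𝔥 be Lie algebras over k, let ρ : 𝔤 → 𝔤𝔩(𝔥) be a representation of 𝔤 on the underlying module of 𝔥, and let σ : 𝔥 → 𝔤𝔩(𝔤) be a representation of 𝔥 on the underlying module of 𝔤. Define a k-bilinear antisymmetric bracket on 𝔤 ⊕ 𝔥 by [(x,a),(y,b)] = ([x,y] + σ_a(y) − σ_b(x), [a,b] + ρ_x(b) − ρ_y(a)). Then this bracket satisfies the Jacobi identity — and hence makes 𝔤 ⊕ 𝔥 into a Lie algebra containing 𝔤 ⊕ 0 and 0 ⊕ 𝔥 as Lie subalgebras — if and only if for all x, x₁, x₂ ∈ 𝔤 and a, b₁, b₂ ∈ 𝔥 the two compatibility conditions hold: (ii) ρ_x([b₁,b₂]) = [ρ_x(b₁), b₂] + [b₁, ρ_x(b₂)] + ρ_{σ_{b₂}(x)}(b₁) − ρ_{σ_{b₁}(x)}(b₂), and (iii) σ_a([x₁,x₂]) = [σ_a(x₁), x₂] + [x₁, σ_a(x₂)] + σ_{ρ_{x₂}(a)}(x₁) − σ_{ρ_{x₁}(a)}(x₂). -/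

import Mathlib

attribute [local instance] LieRing.ofAssociativeRing

/-- The bilinear antisymmetric bracket of a (candidate) matched pair of Lie algebras:
`[(x,a),(y,b)] = ([x,y] + σ_a(y) - σ_b(x), [a,b] + ρ_x(b) - ρ_y(a))`. -/
def matchedPairBracket {k : Type*} [CommRing k] {L₁ L₂ : Type*}
    [LieRing L₁] [LieAlgebra k L₁] [LieRing L₂] [LieAlgebra k L₂]
    (ρ : L₁ →ₗ⁅k⁆ Module.End k L₂) (σ : L₂ →ₗ⁅k⁆ Module.End k L₁)
    (u v : L₁ × L₂) : L₁ × L₂ :=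
  (⁅u.1, v.1⁆ + σ u.2 v.1 - σ v.2 u.1, ⁅u.2, v.2⁆ + ρ u.1 v.2 - ρ v.1 u.2)

/-- **matched pairs of Lie algebras.**  Let `𝔤 = L₁` and `𝔥 = L₂` be Lie
algebras over a commutative ring `k`, let `ρ : 𝔤 → 𝔤𝔩(𝔥)` be a representation of `𝔤` on the
underlying module of `𝔥` and `σ : 𝔥 → 𝔤𝔩(𝔤)` a representation of `𝔥` on the underlying module
of `𝔤`.  The bracket `[(x,a),(y,b)] = ([x,y] + σ_a y - σ_b x, [a,b] + ρ_x b - ρ_y a)` on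
`𝔤 ⊕ 𝔥` satisfies the Jacobi identity (hence makes `𝔤 ⊕ 𝔥` a Lie algebra containing `𝔤 ⊕ 0`
and `0 ⊕ 𝔥` as Lie subalgebras) if and only if the two matched-pair compatibility conditions
hold. -/
theorem matchedPair_jacobi_iff {k : Type*} [CommRing k] {L₁ L₂ : Type*}
    [LieRing L₁] [LieAlgebra k L₁] [LieRing L₂] [LieAlgebra k L₂]
    (ρ : L₁ →ₗ⁅k⁆ Module.End k L₂) (σ : L₂ →ₗ⁅k⁆ Module.End k L₁) :
    (∀ u v w : L₁ × L₂,
        matchedPairBracket ρ σ (matchedPairBracket ρ σ u v) w +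
          matchedPairBracket ρ σ (matchedPairBracket ρ σ v w) u +
          matchedPairBracket ρ σ (matchedPairBracket ρ σ w u) v = 0)
      ↔ ((∀ (x : L₁) (b₁ b₂ : L₂),
            ρ x ⁅b₁, b₂⁆ =
              ⁅ρ x b₁, b₂⁆ + ⁅b₁, ρ x b₂⁆ + ρ (σ b₂ x) b₁ - ρ (σ b₁ x) b₂) ∧
          (∀ (a : L₂) (x₁ x₂ : L₁),
            σ a ⁅x₁, x₂⁆ =
              ⁅σ a x₁, x₂⁆ + ⁅x₁, σ a x₂⁆ + σ (ρ x₂ a) x₁ - σ (ρ x₁ a) x₂)) := by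
  constructor
  · intro h
    constructor
    · intro x b₁ b₂
      have key := congrArg Prod.snd (h (x, 0) (0, b₁) (0, b₂))
      simp only [matchedPairBracket, Prod.snd_add, Prod.fst_add, map_zero, map_neg, map_sub,
        LinearMap.zero_apply, LinearMap.neg_apply,
        LinearMap.sub_apply, zero_lie, lie_zero, add_zero, zero_add, sub_zero, zero_sub,
        neg_lie, lie_neg, neg_neg, Prod.snd_zero, ← lie_skew (ρ x b₂) b₁] at key
      rw [← sub_eq_zero, ← neg_eq_zero, ← key]; abel
    · intro a x₁ x₂
      have key := congrArg Prod.fst (h (0, a) (x₁, 0) (x₂, 0))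
      simp only [matchedPairBracket, Prod.snd_add, Prod.fst_add, map_zero, map_neg, map_sub,
        LinearMap.zero_apply, LinearMap.neg_apply,
        LinearMap.sub_apply, zero_lie, lie_zero, add_zero, zero_add, sub_zero, zero_sub,
        neg_lie, lie_neg, neg_neg, Prod.fst_zero, ← lie_skew (σ a x₂) x₁] at key
      rw [← sub_eq_zero, ← neg_eq_zero, ← key]; abel
  · rintro ⟨h₁, h₂⟩ ⟨x, a⟩ ⟨y, b⟩ ⟨z, c⟩
    have hρ : ∀ (x y : L₁) (b : L₂), ρ ⁅x, y⁆ b = ρ x (ρ y b) - ρ y (ρ x b) := by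
      intro x y b; rw [LieHom.map_lie, Ring.lie_def]; rfl
    have hσ : ∀ (a b : L₂) (x : L₁), σ ⁅a, b⁆ x = σ a (σ b x) - σ b (σ a x) := by
      intro a b x; rw [LieHom.map_lie, Ring.lie_def]; rfl
    ext
    · simp only [matchedPairBracket, Prod.fst_add, Prod.snd_add, map_add, map_sub,
        LinearMap.add_apply, LinearMap.sub_apply, lie_add,
        add_lie, lie_sub, sub_lie, hρ, hσ, h₁, h₂, lie_lie, Prod.fst_zero]
      simp only [← lie_skew (σ b x) z, ← lie_skew (σ c y) x, ← lie_skew (σ a z) y,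
        ← lie_skew x z, ← lie_skew y x, ← lie_skew z y, lie_neg, neg_neg]
      have j2 : (2:ℤ) • (⁅x,⁅y,z⁆⁆+⁅y,⁅z,x⁆⁆+⁅z,⁅x,y⁆⁆) = 0 := by
        rw [lie_jacobi, smul_zero]
      rw [← j2]; abel
    · simp only [matchedPairBracket, Prod.fst_add, Prod.snd_add, map_add, map_sub,
        LinearMap.add_apply, LinearMap.sub_apply, lie_add,
        add_lie, lie_sub, sub_lie, hρ, hσ, h₁, h₂, lie_lie, Prod.snd_zero]
      simp only [← lie_skew (ρ y a) c, ← lie_skew (ρ z b) a, ← lie_skew (ρ x c) b,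
        ← lie_skew a c, ← lie_skew b a, ← lie_skew c b, lie_neg, neg_neg]
      have j2 : (2:ℤ) • (⁅a,⁅b,c⁆⁆+⁅b,⁅c,a⁆⁆+⁅c,⁅a,b⁆⁆) = 0 := by
        rw [lie_jacobi, smul_zero]
      rw [← j2]; abel
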